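/- (Incremental learning under small spectral initialization.) Let Y be a real symmetric positive semi-definite n×n matrix with eigendecomposition Y = Φ Σ_Y Φᵀ, Φ orthogonal, Σ_Y = diag(σ_{1,Y}, …, σ_{n,Y}), whose K non-zero eigenvalues σ_{1,Y} > σ_{2,Y} > ⋯ > σ_{K,Y} > 0 are distinct and listed in decreasing order (σ_{i,Y} = 0 for i > K). Let the initialization be W(0) = α Φ Σ_{U₀}² Φᵀ with Σ_{U₀}² = diag(σ_{1,0}, …, σ_{n,0}), σ_{i,0} ≥ 0 for all i and σ_{i,0} > 0 for 1 ≤ i ≤ K, and let W(t) be the unique solution of Ẇ = WY + YW − 2W² from this initialization. Given an error tolerance 0 < ε ≤ σ_{K,Y}, set c_ε = ε / max_i σ_{i,0} and C_ε = σ_{1,Y}² / (ε · min_{1 ≤ i ≤ K} σ_{i,0}). Suppose α ≤ c_ε and (−log α + log c_ε)/(−log α + log C_ε) > max_{1 ≤ k ≤ K−1} σ_{k+1,Y}/σ_{k,Y}. Then for each 1 ≤ k ≤ K the interval I_k = [ (1/(2σ_{k,Y})) log(C_ε/α), (1/(2σ_{k+1,Y})) log(c_ε/α) ] (with 1/σ_{K+1,Y}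 := ∞) is non-empty, and for every t ∈ I_k, ‖W(t) − Ŷ_k‖ ≤ ε, where Ŷ_k = Φ diag(σ_{1,Y}, …, σ_{k,Y}, 0, …, 0) Φᵀ is the best rank-k approximation of Y and ‖·‖ denotes the spectral norm. -/

import Mathlib

open scoped Matrix.Norms.L2Operator
open scoped Matrix

namespace IncAux

/-- Explicit scalar solution of `ẇ = 2 d w - 2 w²` with `w 0 = x`. -/
noncomputable def sol (dd xx t : ℝ) : ℝ :=
  if dd = 0 then xx / (1 + 2 * xx * t)
  else dd * xx * Real.exp (2 * dd * t) / (dd - xx + xx * Real.exp (2 * dd * t))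

lemma den_pos {dd xx : ℝ} (hx : 0 < xx) (hxd : xx ≤ dd) (t : ℝ) :
    0 < dd - xx + xx * Real.exp (2 * dd * t) := by
  have := Real.exp_pos (2 * dd * t)
  nlinarith

lemma sol_zero {dd xx : ℝ} (h : (dd = 0 ∧ 0 ≤ xx) ∨ (0 < xx ∧ xx ≤ dd)) :
    sol dd xx 0 = xx := by
  rcases h with ⟨hd, _⟩ | ⟨hx, hxd⟩
  · simp [sol, hd]
  · have hd : 0 < dd := lt_of_lt_of_le hx hxd
    rw [sol, if_neg hd.ne']
    rw [mul_zero, Real.exp_zero]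
    rw [show dd - xx + xx * 1 = dd by ring, mul_one]
    exact mul_div_cancel_left₀ xx hd.ne'

lemma sol_hasDerivAt {dd xx : ℝ} (h : (dd = 0 ∧ 0 ≤ xx) ∨ (0 < xx ∧ xx ≤ dd)) {t : ℝ}
    (ht : 0 ≤ t) :
    HasDerivAt (sol dd xx) (2 * dd * sol dd xx t - 2 * sol dd xx t ^ 2) t := by
  rcases h with ⟨hd, hx⟩ | ⟨hx, hxd⟩
  · subst hd
    have hfun : sol 0 xx = fun τ => xx / (1 + 2 * xx * τ) := by
      funext τ; simp [sol]
    simp only [hfun]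
    have hden : (1 + 2 * xx * t) ≠ 0 := by nlinarith
    have h1 : HasDerivAt (fun τ : ℝ => 1 + 2 * xx * τ) (2 * xx) t := by
      simpa using ((hasDerivAt_id t).const_mul (2 * xx)).const_add 1
    have := (hasDerivAt_const t xx).div h1 hden
    refine this.congr_deriv ?_
    field_simp [hden]
    ring
  · have hd : 0 < dd := lt_of_lt_of_le hx hxd
    have hfun : sol dd xx = fun τ => dd * xx * Real.exp (2 * dd * τ)
        / (dd - xx + xx * Real.exp (2 * dd * τ)) := by
      funext τ; simp [sol, hd.ne']
    simp only [hfun]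
    have hE : HasDerivAt (fun τ : ℝ => Real.exp (2 * dd * τ)) (Real.exp (2 * dd * t) * (2 * dd)) t := by
      simpa using ((hasDerivAt_id t).const_mul (2 * dd)).exp
    have hnum : HasDerivAt (fun τ => dd * xx * Real.exp (2 * dd * τ))
        (dd * xx * (Real.exp (2 * dd * t) * (2 * dd))) t := hE.const_mul (dd * xx)
    have hden : HasDerivAt (fun τ => dd - xx + xx * Real.exp (2 * dd * τ))
        (xx * (Real.exp (2 * dd * t) * (2 * dd))) t := (hE.const_mul xx).const_add (dd - xx)
    have hne := (den_pos hx hxd t).ne'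
    have := hnum.div hden hne
    refine this.congr_deriv ?_
    have hEpos : (0:ℝ) < Real.exp (2 * dd * t) := Real.exp_pos _
    field_simp [hne]

lemma sol_nonneg {dd xx : ℝ} (h : (dd = 0 ∧ 0 ≤ xx) ∨ (0 < xx ∧ xx ≤ dd)) {t : ℝ}
    (ht : 0 ≤ t) : 0 ≤ sol dd xx t := by
  rcases h with ⟨hd, hx⟩ | ⟨hx, hxd⟩
  · subst hd
    have hfun : sol 0 xx = fun τ => xx / (1 + 2 * xx * τ) := by
      funext τ; simp [sol]
    simp only [hfun]
    apply div_nonneg hx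
    nlinarith
  · have hd : 0 < dd := lt_of_lt_of_le hx hxd
    rw [sol, if_neg hd.ne']
    exact div_nonneg (by positivity) (den_pos hx hxd t).le

lemma sol_le_dd {dd xx : ℝ} (hx : 0 < xx) (hxd : xx ≤ dd) (t : ℝ) : sol dd xx t ≤ dd := by
  have hd : 0 < dd := lt_of_lt_of_le hx hxd
  rw [sol, if_neg hd.ne', div_le_iff₀ (den_pos hx hxd t)]
  have := Real.exp_pos (2 * dd * t)
  nlinarith

lemma sol_le_exp {dd xx : ℝ} (h : (dd = 0 ∧ 0 ≤ xx) ∨ (0 < xx ∧ xx ≤ dd)) {t : ℝ}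
    (ht : 0 ≤ t) : sol dd xx t ≤ xx * Real.exp (2 * dd * t) := by
  rcases h with ⟨hd, hx⟩ | ⟨hx, hxd⟩
  · subst hd
    have hfun : sol 0 xx = fun τ => xx / (1 + 2 * xx * τ) := by
      funext τ; simp [sol]
    simp only [hfun, mul_zero, zero_mul, Real.exp_zero, mul_one]
    rcases eq_or_lt_of_le hx with h0 | h0
    · simp [← h0]
    · have h1 : (1:ℝ) ≤ 1 + 2 * xx * t := by nlinarith
      exact div_le_self hx h1
  · have hd : 0 < dd := lt_of_lt_of_le hx hxd
    have hE1 : 1 ≤ Real.exp (2 * dd * t) := Real.one_le_exp (by positivity)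
    rw [sol, if_neg hd.ne', div_le_iff₀ (den_pos hx hxd t)]
    have hEpos := Real.exp_pos (2 * dd * t)
    have key : xx * Real.exp (2 * dd * t) * (dd - xx + xx * Real.exp (2 * dd * t))
        - dd * xx * Real.exp (2 * dd * t)
        = xx * xx * Real.exp (2 * dd * t) * (Real.exp (2 * dd * t) - 1) := by ring
    nlinarith [mul_nonneg (mul_nonneg (mul_nonneg hx.le hx.le) hEpos.le)
      (sub_nonneg.2 hE1)]

lemma sol_lower {dd xx : ℝ} (hx : 0 < xx) (hxd : xx ≤ dd) {t : ℝ} (ht : 0 ≤ t) :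
    dd - sol dd xx t ≤ dd ^ 2 / (xx * Real.exp (2 * dd * t)) := by
  have hd : 0 < dd := lt_of_lt_of_le hx hxd
  have hden := den_pos hx hxd t
  have hE1 : 1 ≤ Real.exp (2 * dd * t) := Real.one_le_exp (by positivity)
  have hEpos := Real.exp_pos (2 * dd * t)
  rw [sol, if_neg hd.ne']
  have h1 : dd - dd * xx * Real.exp (2 * dd * t) / (dd - xx + xx * Real.exp (2 * dd * t))
      = dd * (dd - xx) / (dd - xx + xx * Real.exp (2 * dd * t)) := by
    rw [eq_div_iff hden.ne', sub_mul, div_mul_cancel₀ _ hden.ne']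
    ring
  rw [h1]
  exact div_le_div₀ (by positivity) (by nlinarith) (by positivity) (by nlinarith)

/-- Operator norm bound for a real diagonal matrix. -/
lemma diag_opNorm_le {n : ℕ} (v : Fin n → ℝ) {c : ℝ} (hc : 0 ≤ c) (h : ∀ i, |v i| ≤ c) :
    ‖Matrix.diagonal v‖ ≤ c := by
  rw [Matrix.l2_opNorm_def]
  refine ContinuousLinearMap.opNorm_le_bound _ hc fun y => ?_
  have hval : ∀ i, ((Matrix.toEuclideanLin ≪≫ₗ LinearMap.toContinuousLinearMap)
      (Matrix.diagonal v) y) i = v i * y i := by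
    intro i
    simp [Matrix.toEuclideanLin_apply, Matrix.mulVec_diagonal]
  rw [EuclideanSpace.norm_eq, EuclideanSpace.norm_eq]
  have step1 : ∑ i, ‖((Matrix.toEuclideanLin ≪≫ₗ LinearMap.toContinuousLinearMap)
      (Matrix.diagonal v) y) i‖ ^ 2 ≤ ∑ i, c ^ 2 * ‖y i‖ ^ 2 := by
    apply Finset.sum_le_sum
    intro i _
    rw [hval i]
    rw [Real.norm_eq_abs, Real.norm_eq_abs, abs_mul]
    have h1 : |v i| * |y i| ≤ c * |y i| := mul_le_mul_of_nonneg_right (h i) (abs_nonneg _)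
    calc (|v i| * |y i|) ^ 2 ≤ (c * |y i|) ^ 2 := by
          apply sq_le_sq' <;> nlinarith [abs_nonneg (v i), abs_nonneg (y i)]
      _ = c ^ 2 * |y i| ^ 2 := by ring
  calc √(∑ i, ‖_‖ ^ 2) ≤ √(∑ i, c ^ 2 * ‖y i‖ ^ 2) := Real.sqrt_le_sqrt step1
    _ = c * √(∑ i, ‖y i‖ ^ 2) := by
        rw [← Finset.mul_sum, Real.sqrt_mul (sq_nonneg c), Real.sqrt_sq hc]


section MatrixAux

open Matrix

/-- Conjugation by `Φ` of diagonal matrices is multiplicative when `Φᵀ * Φ = 1`. -/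
lemma conj_mul {n : ℕ} (Φ : Matrix (Fin n) (Fin n) ℝ) (hΦ2 : Φᵀ * Φ = 1)
    (u v : Fin n → ℝ) :
    (Φ * Matrix.diagonal u * Φᵀ) * (Φ * Matrix.diagonal v * Φᵀ)
      = Φ * Matrix.diagonal (u * v) * Φᵀ := by
  calc (Φ * Matrix.diagonal u * Φᵀ) * (Φ * Matrix.diagonal v * Φᵀ)
      = Φ * (Matrix.diagonal u * ((Φᵀ * Φ) * (Matrix.diagonal v * Φᵀ))) := by
        simp only [Matrix.mul_assoc]
    _ = Φ * (Matrix.diagonal u * (Matrix.diagonal v * Φᵀ)) := by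
        rw [hΦ2, Matrix.one_mul]
    _ = Φ * (Matrix.diagonal u * Matrix.diagonal v * Φᵀ) := by
        simp only [Matrix.mul_assoc]
    _ = Φ * Matrix.diagonal (u * v) * Φᵀ := by
        rw [Matrix.diagonal_mul_diagonal, Matrix.mul_assoc]
        rfl

lemma conj_sub {n : ℕ} (Φ : Matrix (Fin n) (Fin n) ℝ) (u v : Fin n → ℝ) :
    Φ * Matrix.diagonal u * Φᵀ - Φ * Matrix.diagonal v * Φᵀ
      = Φ * Matrix.diagonal (u - v) * Φᵀ := by
  have h : Matrix.diagonal u - Matrix.diagonal v = Matrix.diagonal (u - v) :=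
    Matrix.diagonal_sub u v
  rw [← h, Matrix.mul_sub, Matrix.sub_mul]

lemma conj_smul {n : ℕ} (Φ : Matrix (Fin n) (Fin n) ℝ) (c : ℝ) (v : Fin n → ℝ) :
    c • (Φ * Matrix.diagonal v * Φᵀ) = Φ * Matrix.diagonal (c • v) * Φᵀ := by
  rw [Matrix.diagonal_smul, Matrix.mul_smul, Matrix.smul_mul]

/-- Norm bound for conjugated diagonal matrices, `Φ` orthogonal. -/
lemma conj_norm_le {n : ℕ} [NeZero n] (Φ : Matrix (Fin n) (Fin n) ℝ)
    (hΦ1 : Φ * Φᵀ = 1) (hΦ2 : Φᵀ * Φ = 1) (v : Fin n → ℝ) {c : ℝ} (hc : 0 ≤ c)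
    (hv : ∀ i, |v i| ≤ c) : ‖Φ * Matrix.diagonal v * Φᵀ‖ ≤ c := by
  have hΦH : Φᴴ = Φᵀ := by ext i j; simp [Matrix.conjTranspose_apply]
  have hone : ‖(1 : Matrix (Fin n) (Fin n) ℝ)‖ = 1 := norm_one
  have hΦnorm : ‖Φ‖ = 1 := by
    have h2 := Matrix.l2_opNorm_conjTranspose_mul_self Φ
    rw [hΦH, hΦ2, hone] at h2
    nlinarith [norm_nonneg Φ]
  have hΦtnorm : ‖Φᵀ‖ = 1 := by rw [← hΦH, Matrix.l2_opNorm_conjTranspose, hΦnorm]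
  calc ‖Φ * Matrix.diagonal v * Φᵀ‖ ≤ ‖Φ * Matrix.diagonal v‖ * ‖Φᵀ‖ := norm_mul_le _ _
    _ ≤ ‖Φ‖ * ‖Matrix.diagonal v‖ * ‖Φᵀ‖ :=
        mul_le_mul_of_nonneg_right (norm_mul_le _ _) (norm_nonneg _)
    _ = ‖Matrix.diagonal v‖ := by rw [hΦnorm, hΦtnorm]; ring
    _ ≤ c := diag_opNorm_le v hc hv

/-- The spectral ansatz solves the matrix ODE. -/
lemma spectral_hasDerivAt {n : ℕ} (Φ : Matrix (Fin n) (Fin n) ℝ) (hΦ2 : Φᵀ * Φ = 1)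
    (d : Fin n → ℝ) (g : Fin n → ℝ → ℝ) (t : ℝ)
    (hg : ∀ i, HasDerivAt (g i) (2 * d i * g i t - 2 * g i t ^ 2) t) :
    HasDerivAt (fun τ => Φ * Matrix.diagonal (fun i => g i τ) * Φᵀ)
      ((Φ * Matrix.diagonal (fun i => g i t) * Φᵀ) * (Φ * Matrix.diagonal d * Φᵀ)
        + (Φ * Matrix.diagonal d * Φᵀ) * (Φ * Matrix.diagonal (fun i => g i t) * Φᵀ)
        - 2 * ((Φ * Matrix.diagonal (fun i => g i t) * Φᵀ)
              * (Φ * Matrix.diagonal (fun i => g i t) * Φᵀ))) t := by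
  set Dl : (Fin n → ℝ) →ₗ[ℝ] Matrix (Fin n) (Fin n) ℝ :=
    { toFun := fun v => Φ * Matrix.diagonal v * Φᵀ
      map_add' := by
        intro u v
        show Φ * Matrix.diagonal (u + v) * Φᵀ
          = Φ * Matrix.diagonal u * Φᵀ + Φ * Matrix.diagonal v * Φᵀ
        have h : Matrix.diagonal u + Matrix.diagonal v = Matrix.diagonal (u + v) :=
          Matrix.diagonal_add u v
        rw [← h, Matrix.mul_add, Matrix.add_mul]
      map_smul' := by
        intro c v
        show Φ * Matrix.diagonal (c • v) * Φᵀ = c • (Φ * Matrix.diagonal v * Φᵀ)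
        rw [Matrix.diagonal_smul, Matrix.mul_smul, Matrix.smul_mul] } with hDl
  set L := LinearMap.toContinuousLinearMap Dl with hLdef
  have hLapp : ∀ v : Fin n → ℝ, L v = Φ * Matrix.diagonal v * Φᵀ := fun v => rfl
  have hf : HasDerivAt (fun τ => (fun i => g i τ))
      (fun i => 2 * d i * g i t - 2 * g i t ^ 2) t := hasDerivAt_pi.2 hg
  have hcomp := (L.hasFDerivAt (x := fun i => g i t)).comp_hasDerivAt t hf
  set u : Fin n → ℝ := fun i => g i t with hu
  have hid : L (fun i => 2 * d i * g i t - 2 * g i t ^ 2)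
      = (Φ * Matrix.diagonal u * Φᵀ) * (Φ * Matrix.diagonal d * Φᵀ)
        + (Φ * Matrix.diagonal d * Φᵀ) * (Φ * Matrix.diagonal u * Φᵀ)
        - 2 * ((Φ * Matrix.diagonal u * Φᵀ) * (Φ * Matrix.diagonal u * Φᵀ)) := by
    rw [conj_mul Φ hΦ2, conj_mul Φ hΦ2, conj_mul Φ hΦ2]
    have h1 : (fun i => 2 * d i * g i t - 2 * g i t ^ 2)
        = (2:ℝ) • (d * u) - (2:ℝ) • (u * u) := by
      funext i
      simp only [Pi.sub_apply, Pi.smul_apply, Pi.mul_apply, smul_eq_mul, hu]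
      ring
    rw [h1, map_sub, _root_.map_smul, _root_.map_smul, hLapp, hLapp]
    rw [show u * d = d * u from mul_comm u d]
    rw [conj_smul, conj_smul, Matrix.diagonal_smul, Matrix.diagonal_smul]
    rw [Matrix.mul_smul, Matrix.smul_mul, Matrix.mul_smul, Matrix.smul_mul]
    rw [two_smul ℝ (Φ * Matrix.diagonal (d * u) * Φᵀ)]
    have h2 : (2:ℝ) • (Φ * Matrix.diagonal (u * u) * Φᵀ)
        = 2 * (Φ * Matrix.diagonal (u * u) * Φᵀ) := by
      rw [two_smul, two_mul]
    rw [h2]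
  rw [hid] at hcomp
  exact hcomp

/-- Uniqueness: any forward solution agrees with a global solution. -/
lemma ode_unique {n : ℕ} (Y : Matrix (Fin n) (Fin n) ℝ)
    (W V : ℝ → Matrix (Fin n) (Fin n) ℝ)
    (hW : ∀ t : ℝ, 0 ≤ t →
      HasDerivWithinAt W (W t * Y + Y * W t - 2 * (W t * W t)) (Set.Ici 0) t)
    (hV : ∀ t : ℝ, 0 ≤ t → HasDerivAt V (V t * Y + Y * V t - 2 * (V t * V t)) t)
    (h0 : W 0 = V 0) {b : ℝ} (hb : 0 ≤ b) : W b = V b := by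
  rcases eq_or_lt_of_le hb with h | hb'
  · rw [← h]; exact h0
  have hWcont : ContinuousOn W (Set.Icc 0 b) := fun τ hτ =>
    ((hW τ hτ.1).continuousWithinAt).mono (fun s hs => hs.1)
  have hVcont : ContinuousOn V (Set.Icc 0 b) := fun τ hτ =>
    ((hV τ hτ.1).continuousAt).continuousWithinAt
  obtain ⟨C1, hC1⟩ :=
    (isCompact_Icc : IsCompact (Set.Icc (0:ℝ) b)).exists_bound_of_continuousOn hWcont
  obtain ⟨C2, hC2⟩ :=
    (isCompact_Icc : IsCompact (Set.Icc (0:ℝ) b)).exists_bound_of_continuousOn hVcont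
  set R := max (max C1 C2) 0 with hRdef
  have hR0 : 0 ≤ R := le_max_right _ _
  have hLipconst : 0 ≤ 2 * ‖Y‖ + 4 * R := by positivity
  have hLip : ∀ τ : ℝ, LipschitzOnWith (Real.toNNReal (2 * ‖Y‖ + 4 * R))
      (fun M : Matrix (Fin n) (Fin n) ℝ => M * Y + Y * M - 2 * (M * M))
      (Metric.closedBall 0 R) := by
    intro τ
    rw [lipschitzOnWith_iff_dist_le_mul]
    intro A hA B hB
    rw [Metric.mem_closedBall, dist_zero_right] at hA hB
    rw [dist_eq_norm, dist_eq_norm, Real.coe_toNNReal _ hLipconst]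
    have hE : A * Y + Y * A - 2 * (A * A) - (B * Y + Y * B - 2 * (B * B))
        = (A - B) * Y + Y * (A - B)
          - ((A * (A - B) + (A - B) * B) + (A * (A - B) + (A - B) * B)) := by
      noncomm_ring
    rw [hE]
    have h1 : ‖(A - B) * Y + Y * (A - B)
        - ((A * (A - B) + (A - B) * B) + (A * (A - B) + (A - B) * B))‖
        ≤ ‖(A - B) * Y‖ + ‖Y * (A - B)‖
          + (‖A * (A - B)‖ + ‖(A - B) * B‖ + (‖A * (A - B)‖ + ‖(A - B) * B‖)) := by
      refine (norm_sub_le _ _).trans ?_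
      gcongr
      · exact norm_add_le _ _
      · exact (norm_add_le _ _).trans (by gcongr <;> exact norm_add_le _ _)
    refine h1.trans ?_
    have h2 := norm_mul_le (A - B) Y
    have h3 := norm_mul_le Y (A - B)
    have h4 := norm_mul_le A (A - B)
    have h5 := norm_mul_le (A - B) B
    nlinarith [norm_nonneg (A - B), norm_nonneg Y, norm_nonneg A, norm_nonneg B]
  have huniq := ODE_solution_unique_of_mem_Icc_right
    (v := fun _ M => M * Y + Y * M - 2 * (M * M))
    (s := fun _ => Metric.closedBall (0 : Matrix (Fin n) (Fin n) ℝ) R)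
    (fun τ _ => hLip τ) hWcont
    (fun τ hτ => (hW τ hτ.1).mono (Set.Ici_subset_Ici.2 hτ.1))
    (fun τ hτ => by
      rw [Metric.mem_closedBall, dist_zero_right]
      exact le_trans (hC1 τ (Set.Ico_subset_Icc_self hτ))
        (le_trans (le_max_left _ _) (le_max_left _ _)))
    hVcont
    (fun τ hτ => (hV τ hτ.1).hasDerivWithinAt)
    (fun τ hτ => by
      rw [Metric.mem_closedBall, dist_zero_right]
      exact le_trans (hC2 τ (Set.Ico_subset_Icc_self hτ))
        (le_trans (le_max_right _ _) (le_max_left _ _)))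
    h0
  exact huniq (Set.right_mem_Icc.2 hb)

end MatrixAux

end IncAux

open IncAux in
set_option maxHeartbeats 1000000 in
theorem incremental_learning_spectral_initialization
    (n K : ℕ) (hK : 0 < K) (hKn : K ≤ n)
    (Φ : Matrix (Fin n) (Fin n) ℝ) (hΦ : Φ * Φᵀ = 1 ∧ Φᵀ * Φ = 1)
    (d : Fin n → ℝ)
    (hdpos : ∀ i : Fin n, i.val < K → 0 < d i)
    (hdzero : ∀ i : Fin n, K ≤ i.val → d i = 0)
    (hddec : ∀ i j : Fin n, i < j → j.val < K → d j < d i)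
    (Y : Matrix (Fin n) (Fin n) ℝ) (hY : Y = Φ * Matrix.diagonal d * Φᵀ)
    (σ0 : Fin n → ℝ) (hσ0 : ∀ i, 0 ≤ σ0 i)
    (hσ0K : ∀ i : Fin n, i.val < K → 0 < σ0 i)
    (α : ℝ) (hα : 0 < α)
    (W : ℝ → Matrix (Fin n) (Fin n) ℝ)
    (hW0 : W 0 = α • (Φ * Matrix.diagonal σ0 * Φᵀ))
    (hWd : ∀ t : ℝ, 0 ≤ t →
      HasDerivWithinAt W (W t * Y + Y * W t - 2 * (W t * W t)) (Set.Ici 0) t)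
    (ε : ℝ) (hε : 0 < ε) (hεK : ε ≤ d ⟨K - 1, by omega⟩)
    (cε Cε : ℝ)
    (hcε : cε = ε / (⨆ i, σ0 i))
    (hCε : Cε = (d ⟨0, by omega⟩) ^ 2 / (ε * ⨅ i : Fin K, σ0 (Fin.castLE hKn i)))
    (hαcε : α ≤ cε)
    (hsep : ∀ (k : ℕ) (hk : k + 1 < K),
      (-Real.log α + Real.log cε) / (-Real.log α + Real.log Cε) >
        d ⟨k + 1, by omega⟩ / d ⟨k, by omega⟩) :
    ∀ (k : ℕ) (hk : k < K),
      (if h : k + 1 < K then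
        Set.Icc (1 / (2 * d ⟨k, by omega⟩) * Real.log (Cε / α))
          (1 / (2 * d ⟨k + 1, by omega⟩) * Real.log (cε / α))
      else
        Set.Ici (1 / (2 * d ⟨k, by omega⟩) * Real.log (Cε / α))).Nonempty ∧
      ∀ t ∈ (if h : k + 1 < K then
        Set.Icc (1 / (2 * d ⟨k, by omega⟩) * Real.log (Cε / α))
          (1 / (2 * d ⟨k + 1, by omega⟩) * Real.log (cε / α))
      else
        Set.Ici (1 / (2 * d ⟨k, by omega⟩) * Real.log (Cε / α))),
        ‖W t - Φ * Matrix.diagonal (fun i => if i.val ≤ k then d i else 0) * Φᵀ‖ ≤ ε := by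
  haveI : NeZero n := ⟨by omega⟩
  -- ordering facts
  have hd_anti : ∀ i j : Fin n, i ≤ j → j.val < K → d j ≤ d i := by
    intro i j hij hj
    rcases eq_or_lt_of_le hij with h | h
    · rw [h]
    · exact (hddec i j h hj).le
  have hdK1_le : ∀ i : Fin n, i.val < K → d ⟨K - 1, by omega⟩ ≤ d i := by
    intro i hi
    exact hd_anti i ⟨K - 1, by omega⟩ (by simp only [Fin.le_def]; omega) (by simp; omega)
  have hd0_ge : ∀ i : Fin n, i.val < K → d i ≤ d ⟨0, by omega⟩ := by
    intro i hi
    exact hd_anti ⟨0, by omega⟩ i (by simp only [Fin.le_def]; omega) hi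
  have hd0_pos : 0 < d ⟨0, by omega⟩ := hdpos _ (by simpa using hK)
  have hdK1_pos : 0 < d ⟨K - 1, by omega⟩ := hdpos _ (by simp; omega)
  -- sup and inf facts
  set S := ⨆ i, σ0 i with hSdef
  have hS_ge : ∀ i, σ0 i ≤ S := fun i => le_ciSup (Set.finite_range σ0).bddAbove i
  have hS_pos : 0 < S := lt_of_lt_of_le (hσ0K ⟨0, by omega⟩ (by simpa using hK)) (hS_ge _)
  haveI : Nonempty (Fin K) := ⟨⟨0, hK⟩⟩
  set m := ⨅ i : Fin K, σ0 (Fin.castLE hKn i) with hmdef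
  have hm_le : ∀ i : Fin n, i.val < K → m ≤ σ0 i := by
    intro i hi
    have h1 := ciInf_le (Set.finite_range (fun j : Fin K => σ0 (Fin.castLE hKn j))).bddBelow
      (⟨i.val, hi⟩ : Fin K)
    have he : Fin.castLE hKn (⟨i.val, hi⟩ : Fin K) = i := by ext; rfl
    rwa [he] at h1
  have hm_pos : 0 < m := by
    obtain ⟨j, hj⟩ := exists_eq_ciInf_of_finite (f := fun i : Fin K => σ0 (Fin.castLE hKn i))
    rw [hmdef, ← hj]
    exact hσ0K _ (by simpa using j.isLt)
  have hm_le_S : m ≤ S := le_trans (hm_le ⟨0, by omega⟩ (by simpa using hK)) (hS_ge _)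
  -- cε, Cε facts
  have hcε_pos : 0 < cε := by rw [hcε]; exact div_pos hε hS_pos
  have hScε : S * cε = ε := by rw [hcε]; field_simp
  have hαS : α * S ≤ ε := by nlinarith [hαcε, hS_pos, hScε]
  have hε_le_d0 : ε ≤ d ⟨0, by omega⟩ := le_trans hεK (hdK1_le _ (by simp; omega))
  have hCε_pos : 0 < Cε := by
    rw [hCε]; exact div_pos (pow_pos hd0_pos 2) (mul_pos hε hm_pos)
  have hcC : cε ≤ Cε := by
    rw [hcε, hCε, div_le_div_iff₀ hS_pos (mul_pos hε hm_pos)]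
    nlinarith [mul_le_mul hε_le_d0 hε_le_d0 hε.le hd0_pos.le,
      mul_le_mul_of_nonneg_left hm_le_S (mul_pos hd0_pos hd0_pos).le,
      mul_le_mul_of_nonneg_right (mul_le_mul hε_le_d0 hε_le_d0 hε.le hd0_pos.le) hm_pos.le]
  have hαC : α ≤ Cε := le_trans hαcε hcC
  have hlogC : 0 ≤ Real.log (Cε / α) := Real.log_nonneg ((le_div_iff₀ hα).2 (by linarith))
  have hlogc : 0 ≤ Real.log (cε / α) := Real.log_nonneg ((le_div_iff₀ hα).2 (by linarith))
  -- initialization values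
  set x : Fin n → ℝ := fun i => α * σ0 i with hxdef
  have hx_le_ε : ∀ i, x i ≤ ε := by
    intro i
    have h1 : x i ≤ α * S := mul_le_mul_of_nonneg_left (hS_ge i) hα.le
    linarith
  have hcase : ∀ i : Fin n, (d i = 0 ∧ 0 ≤ x i) ∨ (0 < x i ∧ x i ≤ d i) := by
    intro i
    by_cases hi : i.val < K
    · exact Or.inr ⟨mul_pos hα (hσ0K i hi),
        le_trans (hx_le_ε i) (le_trans hεK (hdK1_le i hi))⟩
    · exact Or.inl ⟨hdzero i (by omega), mul_nonneg hα.le (hσ0 i)⟩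
  -- the explicit solution
  set Wt : ℝ → Matrix (Fin n) (Fin n) ℝ :=
    fun t => Φ * Matrix.diagonal (fun i => sol (d i) (x i) t) * Φᵀ with hWtdef
  have hWt0 : W 0 = Wt 0 := by
    rw [hW0]
    show _ = Φ * Matrix.diagonal (fun i => sol (d i) (x i) 0) * Φᵀ
    have h1 : (fun i => sol (d i) (x i) 0) = (α • σ0 : Fin n → ℝ) :=
      funext fun i => sol_zero (hcase i)
    rw [h1, ← conj_smul]
  have hWtderiv : ∀ t : ℝ, 0 ≤ t →
      HasDerivAt Wt (Wt t * Y + Y * Wt t - 2 * (Wt t * Wt t)) t := by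
    intro t ht
    have := spectral_hasDerivAt Φ hΦ.2 d (fun i => sol (d i) (x i)) t
      (fun i => sol_hasDerivAt (hcase i) ht)
    rw [← hY] at this
    exact this
  have hWeq : ∀ t : ℝ, 0 ≤ t → W t = Wt t :=
    fun t ht => ode_unique Y W Wt hWd hWtderiv hWt0 ht
  -- now fix k
  intro k hk
  have hdk_pos : 0 < d ⟨k, by omega⟩ := hdpos _ hk
  -- the key estimate
  have key : ∀ t : ℝ, 1 / (2 * d ⟨k, by omega⟩) * Real.log (Cε / α) ≤ t →
      (∀ hk1 : k + 1 < K, 2 * d ⟨k + 1, by omega⟩ * t ≤ Real.log (cε / α)) →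
      ‖W t - Φ * Matrix.diagonal (fun i => if i.val ≤ k then d i else 0) * Φᵀ‖ ≤ ε := by
    intro t ht₀ hcond
    have ht0 : 0 ≤ t := le_trans (mul_nonneg (one_div_nonneg.2 (by linarith)) hlogC) ht₀
    have hlogt : Real.log (Cε / α) ≤ 2 * d ⟨k, by omega⟩ * t := by
      have hcancel : 2 * d ⟨k, by omega⟩ * (1 / (2 * d ⟨k, by omega⟩) * Real.log (Cε / α))
          = Real.log (Cε / α) := by field_simp
      nlinarith [mul_le_mul_of_nonneg_left ht₀ (by linarith : (0:ℝ) ≤ 2 * d ⟨k, by omega⟩)]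
    rw [hWeq t ht0]
    show ‖Φ * Matrix.diagonal (fun i => sol (d i) (x i) t) * Φᵀ
      - Φ * Matrix.diagonal (fun i => if i.val ≤ k then d i else 0) * Φᵀ‖ ≤ ε
    rw [conj_sub]
    apply conj_norm_le Φ hΦ.1 hΦ.2 _ hε.le
    intro i
    simp only [Pi.sub_apply]
    by_cases hik : i.val ≤ k
    · have hiK : i.val < K := by omega
      have hxp : 0 < x i := mul_pos hα (hσ0K i hiK)
      have hxd : x i ≤ d i := le_trans (hx_le_ε i) (le_trans hεK (hdK1_le i hiK))
      rw [if_pos hik, abs_sub_comm, abs_of_nonneg (sub_nonneg.2 (sol_le_dd hxp hxd t))]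
      have hlow := sol_lower hxp hxd ht0
      have hexp : Cε / α ≤ Real.exp (2 * d i * t) := by
        rw [← Real.exp_log (div_pos hCε_pos hα)]
        apply Real.exp_le_exp.2
        have hdik : d ⟨k, by omega⟩ ≤ d i :=
          hd_anti i ⟨k, by omega⟩ (by simp only [Fin.le_def]; exact hik) hk
        calc Real.log (Cε / α) ≤ 2 * d ⟨k, by omega⟩ * t := hlogt
          _ ≤ 2 * d i * t := by nlinarith
      have hfin : d i ^ 2 / (x i * Real.exp (2 * d i * t)) ≤ ε := by
        have hub : d i ^ 2 ≤ d ⟨0, by omega⟩ ^ 2 := by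
          nlinarith [hd0_ge i hiK, hdpos i hiK]
        have hxm : α * m ≤ x i := mul_le_mul_of_nonneg_left (hm_le i hiK) hα.le
        have hlb : α * m * (Cε / α) ≤ x i * Real.exp (2 * d i * t) :=
          mul_le_mul hxm hexp (div_nonneg hCε_pos.le hα.le) hxp.le
        have heq : α * m * (Cε / α) = d ⟨0, by omega⟩ ^ 2 / ε := by
          rw [hCε]
          field_simp
        calc d i ^ 2 / (x i * Real.exp (2 * d i * t))
            ≤ d ⟨0, by omega⟩ ^ 2 / (α * m * (Cε / α)) := by
              apply div_le_div₀ (by positivity) hub ?_ hlb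
              have : 0 < Cε / α := div_pos hCε_pos hα
              positivity
          _ = ε := by
              rw [heq]
              field_simp
      linarith
    · push_neg at hik
      rw [if_neg (by omega), sub_zero, abs_of_nonneg (sol_nonneg (hcase i) ht0)]
      by_cases hiK : i.val < K
      · have hk1 : k + 1 < K := by omega
        have hcond' := hcond hk1
        have hd_le : d i ≤ d ⟨k + 1, by omega⟩ :=
          hd_anti ⟨k + 1, by omega⟩ i (by simp only [Fin.le_def]; omega) hiK
        have h2 : 2 * d i * t ≤ Real.log (cε / α) := by
          calc 2 * d i * t ≤ 2 * d ⟨k + 1, by omega⟩ * t := by nlinarith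
            _ ≤ Real.log (cε / α) := hcond'
        calc sol (d i) (x i) t ≤ x i * Real.exp (2 * d i * t) := sol_le_exp (hcase i) ht0
          _ ≤ (α * S) * (cε / α) := by
              apply mul_le_mul (mul_le_mul_of_nonneg_left (hS_ge i) hα.le) ?_
                (Real.exp_pos _).le (by positivity)
              rw [← Real.exp_log (div_pos hcε_pos hα)]
              exact Real.exp_le_exp.2 h2
          _ = S * cε := by field_simp
          _ = ε := hScε
      · have hdz : d i = 0 := hdzero i (by omega)
        calc sol (d i) (x i) t ≤ x i * Real.exp (2 * d i * t) := sol_le_exp (hcase i) ht0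
          _ = x i := by rw [hdz]; simp
          _ ≤ ε := hx_le_ε i
  -- assemble
  by_cases h : k + 1 < K
  · have hdk1_pos : 0 < d ⟨k + 1, by omega⟩ := hdpos _ h
    have hK2 : 2 ≤ K := by omega
    have hεd0 : ε < d ⟨0, by omega⟩ :=
      lt_of_le_of_lt hεK (hddec ⟨0, by omega⟩ ⟨K - 1, by omega⟩
        (by simp only [Fin.lt_def]; omega) (by simp; omega))
    have hCc_strict : cε < Cε := by
      rw [hcε, hCε, div_lt_div_iff₀ hS_pos (mul_pos hε hm_pos)]
      have h1 : ε * ε < d ⟨0, by omega⟩ * d ⟨0, by omega⟩ := by nlinarith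
      nlinarith [mul_lt_mul_of_pos_right h1 hm_pos,
        mul_le_mul_of_nonneg_left hm_le_S
          (by positivity : (0:ℝ) ≤ d ⟨0, by omega⟩ * d ⟨0, by omega⟩)]
    have hlogC_pos : 0 < Real.log (Cε / α) :=
      Real.log_pos (by rw [lt_div_iff₀ hα]; linarith)
    have hlcα : Real.log (cε / α) = -Real.log α + Real.log cε := by
      rw [Real.log_div hcε_pos.ne' hα.ne']; ring
    have hlCα : Real.log (Cε / α) = -Real.log α + Real.log Cε := by
      rw [Real.log_div hCε_pos.ne' hα.ne']; ring
    have hsep' := hsep k h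
    rw [← hlcα, ← hlCα] at hsep'
    have hmul : d ⟨k + 1, by omega⟩ * Real.log (Cε / α)
        < d ⟨k, by omega⟩ * Real.log (cε / α) := by
      have h1 := (div_lt_div_iff₀ hdk_pos hlogC_pos).1 hsep'
      nlinarith
    have ht01 : 1 / (2 * d ⟨k, by omega⟩) * Real.log (Cε / α)
        ≤ 1 / (2 * d ⟨k + 1, by omega⟩) * Real.log (cε / α) := by
      rw [div_mul_eq_mul_div, one_mul, div_mul_eq_mul_div, one_mul,
        div_le_div_iff₀ (by linarith) (by linarith)]
      nlinarith
    rw [dif_pos h]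
    refine ⟨Set.nonempty_Icc.2 ht01, fun t ht => ?_⟩
    refine key t ht.1 fun hk1 => ?_
    have ht1 := ht.2
    have hcancel : 2 * d ⟨k + 1, by omega⟩
        * (1 / (2 * d ⟨k + 1, by omega⟩) * Real.log (cε / α)) = Real.log (cε / α) := by
      field_simp
    nlinarith [mul_le_mul_of_nonneg_left ht1 (by linarith : (0:ℝ) ≤ 2 * d ⟨k + 1, by omega⟩)]
  · rw [dif_neg h]
    refine ⟨Set.nonempty_Ici, fun t ht => ?_⟩
    exact key t ht fun hk1 => absurd hk1 h
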